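/- (Many Absorbers) For every α > 0 with 1/α ∈ ℕ there exist ϑ > 0 and n₀ ∈ ℕ such that for all n ≥ n₀ the following holds, where s = 2/α. If H = ([n], E) is a 3-graph with d(i,j) ≥ min(i, j, n/2) + αn for all pairs {i,j} of distinct vertices, and R ⊆ [n] is any set with |R| ≤ ϑ²n, then for every vertex x ∈ [n] the number of (x,α)-absorbers all of whose entries lie in [n] \ R is at least (αn/3)^{4s}. -/

import Mathlib

/-- `E` is the edge set of a 3-uniform hypergraph on vertex set `[n] = {1, …, n}`. -/
def IsThreeGraph (n : ℕ) (E : Finset (Finset ℕ)) : Prop :=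
  ∀ e ∈ E, e.card = 3 ∧ e ⊆ Finset.Icc 1 n

/-- The pair degree `d(i,j)`: the number of vertices `x` with `{i,j,x} ∈ E`. -/
def pairDeg (n : ℕ) (E : Finset (Finset ℕ)) (i j : ℕ) : ℕ :=
  ((Finset.Icc 1 n).filter fun x => ({i, j, x} : Finset ℕ) ∈ E).card

/-- The degree condition `d(i,j) ≥ min(i, j, n/2) + αn` for all distinct `i, j ∈ [n]`. -/
def DegCond (n : ℕ) (E : Finset (Finset ℕ)) (α : ℝ) : Prop :=
  ∀ i ∈ Finset.Icc 1 n, ∀ j ∈ Finset.Icc 1 n, i ≠ j →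
    min (min (i : ℝ) (j : ℝ)) ((n : ℝ) / 2) + α * n ≤ (pairDeg n E i j : ℝ)

/-- `f` lists the `ℓ + 2` vertices of a tight path of length `ℓ` in the 3-graph
`([n], E)`: the vertices are distinct, lie in `[n]`, and every three consecutive
vertices form an edge. -/
def IsTightPathOn (n : ℕ) (E : Finset (Finset ℕ)) (ℓ : ℕ) (f : Fin (ℓ + 2) → ℕ) : Prop :=
  Function.Injective f ∧ (∀ i, f i ∈ Finset.Icc 1 n) ∧
  ∀ i : ℕ, ∀ h : i < ℓ,
    ({f ⟨i, by omega⟩, f ⟨i + 1, by omega⟩, f ⟨i + 2, by omega⟩} : Finset ℕ) ∈ E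


/-- `(v₁,w₁,y₁,z₁,…,v_s,w_s,y_s,z_s)` (given by the four functions `v w y z`) is an
`(x,α)`-absorber: a `4s`-tuple of distinct vertices of `[n]`, none equal to `x`,
such that `v₁w₁xy₁z₁` is a tight path, `v_iw_iy_{i+1}z_{i+1}` and
`v_{i+1}w_{i+1}y_iz_i` are tight paths for all `i ∈ [s−1]`, and `v_sw_sy_sz_s` is a
tight path (distinctness of the vertices of these short paths follows from the
distinctness of the tuple, so only the edge conditions are recorded). -/
def IsAbsorber (n : ℕ) (E : Finset (Finset ℕ)) (s : ℕ) (x : ℕ)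
    (v w y z : Fin s → ℕ) : Prop :=
  Function.Injective (fun p : Fin 4 × Fin s => ![v, w, y, z] p.1 p.2) ∧
  (∀ i, v i ∈ Finset.Icc 1 n ∧ w i ∈ Finset.Icc 1 n ∧ y i ∈ Finset.Icc 1 n ∧
    z i ∈ Finset.Icc 1 n) ∧
  (∀ i, v i ≠ x ∧ w i ≠ x ∧ y i ≠ x ∧ z i ≠ x) ∧
  (∀ h : 0 < s,
    ({v ⟨0, h⟩, w ⟨0, h⟩, x} : Finset ℕ) ∈ E ∧
    ({w ⟨0, h⟩, x, y ⟨0, h⟩} : Finset ℕ) ∈ E ∧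
    ({x, y ⟨0, h⟩, z ⟨0, h⟩} : Finset ℕ) ∈ E ∧
    ({v ⟨s - 1, by omega⟩, w ⟨s - 1, by omega⟩, y ⟨s - 1, by omega⟩} : Finset ℕ) ∈ E ∧
    ({w ⟨s - 1, by omega⟩, y ⟨s - 1, by omega⟩, z ⟨s - 1, by omega⟩} : Finset ℕ) ∈ E) ∧
  (∀ i : ℕ, ∀ h : i + 1 < s,
    ({v ⟨i, by omega⟩, w ⟨i, by omega⟩, y ⟨i + 1, h⟩} : Finset ℕ) ∈ E ∧
    ({w ⟨i, by omega⟩, y ⟨i + 1, h⟩, z ⟨i + 1, h⟩} : Finset ℕ) ∈ E ∧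
    ({v ⟨i + 1, h⟩, w ⟨i + 1, h⟩, y ⟨i, by omega⟩} : Finset ℕ) ∈ E ∧
    ({w ⟨i + 1, h⟩, y ⟨i, by omega⟩, z ⟨i, by omega⟩} : Finset ℕ) ∈ E)

namespace Stmt7


def nbr (n : ℕ) (E : Finset (Finset ℕ)) (a b : ℕ) : Finset ℕ :=
  (Finset.Icc 1 n).filter fun c => ({a, b, c} : Finset ℕ) ∈ E

lemma nbr_card_eq (n : ℕ) (E : Finset (Finset ℕ)) (a b : ℕ) :
    (nbr n E a b).card = pairDeg n E a b := rfl

lemma nbr_subset (n : ℕ) (E : Finset (Finset ℕ)) (a b : ℕ) :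
    nbr n E a b ⊆ Finset.Icc 1 n := Finset.filter_subset _ _

def tnat (n k j : ℕ) : ℕ := min (j * (n / (2 * k))) (n / 2)

def thr (n k u : ℕ) : ℕ := if 8 * k - 2 ≤ u then 0 else tnat n k (u / 4)

lemma thr_eq {n k u : ℕ} (h : u < 8 * k - 2) : thr n k u = tnat n k (u / 4) :=
  if_neg (by omega)

lemma thr_top {n k u : ℕ} (h : 8 * k - 2 ≤ u) : thr n k u = 0 := if_pos h

lemma tnat_zero (n k : ℕ) : tnat n k 0 = 0 := by simp [tnat]

lemma tnat_mono (n k : ℕ) {j j' : ℕ} (h : j ≤ j') : tnat n k j ≤ tnat n k j' := by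
  unfold tnat
  have : j * (n / (2 * k)) ≤ j' * (n / (2 * k)) := Nat.mul_le_mul_right _ h
  omega

lemma getD_take_eq (l : List ℕ) {q q' : ℕ} (h : q < q') :
    (l.take q').getD q 0 = l.getD q 0 := by
  rcases lt_or_ge q l.length with h2 | h2
  · rw [List.getD_eq_getElem _ _ (by simp; omega), List.getD_eq_getElem _ _ h2]
    exact List.getElem_take ..
  · rw [List.getD_eq_default _ _ (by simp; omega), List.getD_eq_default _ _ h2]

lemma getD_mem_take (l : List ℕ) {q q' : ℕ} (h : q < q') (h2 : q < l.length) :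
    l.getD q 0 ∈ l.take q' := by
  rw [← getD_take_eq l h, List.getD_eq_getElem _ _ (by simp; omega)]
  exact List.getElem_mem _

lemma filter_thr_card {n : ℕ} {X : Finset ℕ} (hX : X ⊆ Finset.Icc 1 n) (t : ℕ) :
    (X.card : ℝ) - t ≤ ((X.filter fun a => t < a).card : ℝ) := by
  have h1 : X.filter (fun a => ¬ t < a) ⊆ Finset.Icc 1 t := by
    intro a ha
    simp only [Finset.mem_filter] at ha
    have := hX ha.1
    simp only [Finset.mem_Icc] at *
    omega
  have h2 := Finset.card_filter_add_card_filter_not (s := X) (p := fun a => t < a)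
  have h3 : (X.filter (fun a => ¬ t < a)).card ≤ t :=
    le_trans (Finset.card_le_card h1) (by rw [Nat.card_Icc]; omega)
  have : X.card ≤ (X.filter fun a => t < a).card + t := by omega
  have := (Nat.cast_le (α := ℝ)).2 this
  push_cast at this ⊢
  linarith

lemma inter_card_ge (n : ℕ) (E : Finset (Finset ℕ)) (a b a' b' : ℕ) :
    ((nbr n E a b).card : ℝ) + ((nbr n E a' b').card : ℝ) - n ≤
      (((nbr n E a b) ∩ (nbr n E a' b')).card : ℝ) := by
  have h1 := Finset.card_union_add_card_inter (nbr n E a b) (nbr n E a' b')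
  have h2 : ((nbr n E a b) ∪ (nbr n E a' b')).card ≤ n := by
    have h3 := Finset.card_le_card
      (Finset.union_subset (nbr_subset n E a b) (nbr_subset n E a' b'))
    rw [Nat.card_Icc] at h3; omega
  have : (nbr n E a b).card + (nbr n E a' b').card ≤
      ((nbr n E a b) ∩ (nbr n E a' b')).card + n := by omega
  have := (Nat.cast_le (α := ℝ)).2 this
  push_cast at this ⊢
  linarith

lemma deg_ge {n : ℕ} {E : Finset (Finset ℕ)} {α : ℝ} (hdeg : DegCond n E α) {a b : ℕ}
    (ha : a ∈ Finset.Icc 1 n) (hb : b ∈ Finset.Icc 1 n) (hab : a ≠ b) :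
    min (min (a : ℝ) (b : ℝ)) ((n : ℝ) / 2) + α * n ≤ ((nbr n E a b).card : ℝ) := by
  rw [nbr_card_eq]; exact hdeg a ha b hb hab


lemma mem_nbr {n : ℕ} {E : Finset (Finset ℕ)} {a b c : ℕ} (h : c ∈ nbr n E a b) :
    ({a, b, c} : Finset ℕ) ∈ E := (Finset.mem_filter.1 h).2

lemma mem_nbr_Icc {n : ℕ} {E : Finset (Finset ℕ)} {a b c : ℕ} (h : c ∈ nbr n E a b) :
    c ∈ Finset.Icc 1 n := (Finset.mem_filter.1 h).1

lemma triple_rot (a b c : ℕ) : ({a, b, c} : Finset ℕ) = {c, a, b} := by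
  ext t; simp; tauto

def core (n k : ℕ) (E : Finset (Finset ℕ)) (x u : ℕ) (l : List ℕ) : Finset ℕ :=
  let g : ℕ → ℕ := fun i => l.getD i 0
  let j := u / 4
  if u % 4 = 0 then
    if j = 0 then Finset.Icc 1 n else nbr n E (g (4 * (j - 1) + 1)) (g (4 * (j - 1) + 3))
  else if u % 4 = 1 then
    if j = 0 then nbr n E (g 0) x else nbr n E (g (4 * (j - 1) + 2)) (g (4 * (j - 1)))
  else if u % 4 = 2 then
    if j = 0 then nbr n E (g 0) x
    else if j = 2 * k - 1 then
      nbr n E (g (4 * j)) (g (4 * (j - 1) + 1)) ∩ nbr n E (g (4 * j)) (g (4 * j + 1))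
    else nbr n E (g (4 * j)) (g (4 * (j - 1) + 1))
  else
    if j = 0 then nbr n E x (g 1)
    else if j = 2 * k - 1 then
      nbr n E (g (4 * (j - 1))) (g (4 * j + 1)) ∩ nbr n E (g (4 * j)) (g (4 * j + 1))
    else nbr n E (g (4 * (j - 1))) (g (4 * j + 1))

def stepSet (n k : ℕ) (E : Finset (Finset ℕ)) (R : Finset ℕ) (x u : ℕ) (l : List ℕ) :
    Finset ℕ :=
  (core n k E x u l).filter fun a => thr n k u < a ∧ a ∉ R ∧ a ≠ x ∧ a ∉ l

lemma core_subset_Icc (n k : ℕ) (E : Finset (Finset ℕ)) (x u : ℕ) (l : List ℕ) :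
    core n k E x u l ⊆ Finset.Icc 1 n := by
  unfold core
  dsimp only
  split_ifs <;>
    first
      | exact Finset.Subset.rfl
      | exact nbr_subset _ _ _ _
      | exact (Finset.inter_subset_left).trans (nbr_subset _ _ _ _)

def build (A : ℕ → List ℕ → Finset ℕ) : ℕ → Finset (List ℕ)
  | 0 => {[]}
  | u + 1 => (build A u).biUnion fun l => (A u l).image fun a => l ++ [a]

lemma build_length (A : ℕ → List ℕ → Finset ℕ) :
    ∀ u, ∀ l ∈ build A u, l.length = u := by
  intro u
  induction u with
  | zero => simp [build]
  | succ u ih =>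
    intro l hl
    simp only [build, Finset.mem_biUnion, Finset.mem_image] at hl
    obtain ⟨l', hl', a, _, rfl⟩ := hl
    simp [ih l' hl']

lemma build_spec (A : ℕ → List ℕ → Finset ℕ) :
    ∀ u, ∀ l ∈ build A u, ∀ q, q < u → l.getD q 0 ∈ A q (l.take q) := by
  intro u
  induction u with
  | zero => intro l _ q hq; omega
  | succ u ih =>
    intro l hl q hq
    simp only [build, Finset.mem_biUnion, Finset.mem_image] at hl
    obtain ⟨l', hl', a, ha, rfl⟩ := hl
    have hlen : l'.length = u := build_length A u l' hl'
    rcases lt_or_eq_of_le (Nat.lt_succ_iff.1 hq) with h | h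
    · have h1 : (l' ++ [a]).getD q 0 = l'.getD q 0 := by
        rw [List.getD_append]; omega
      have h2 : (l' ++ [a]).take q = l'.take q := by
        rw [List.take_append_of_le_length]; omega
      rw [h1, h2]; exact ih l' hl' q h
    · subst h
      have h1 : (l' ++ [a]).getD q 0 = a := by
        simp [List.getD_append_right, hlen]
      have h2 : (l' ++ [a]).take q = l' := by
        rw [← hlen]; exact List.take_left
      rw [h1, h2]; exact ha

lemma build_card (A : ℕ → List ℕ → Finset ℕ) (M : ℕ) :
    ∀ T, (∀ u, u < T → ∀ l ∈ build A u, M ≤ (A u l).card) →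
      M ^ T ≤ (build A T).card := by
  intro T
  induction T with
  | zero => intro _; simp [build]
  | succ T ih =>
    intro h
    have hT := ih fun u hu => h u (by omega)
    have hdisj : ∀ l₁ ∈ build A T, ∀ l₂ ∈ build A T, l₁ ≠ l₂ →
        Disjoint ((A T l₁).image fun a => l₁ ++ [a])
          ((A T l₂).image fun a => l₂ ++ [a]) := by
      intro l₁ h₁ l₂ h₂ hne
      rw [Finset.disjoint_left]
      intro m hm₁ hm₂
      simp only [Finset.mem_image] at hm₁ hm₂
      obtain ⟨a, _, rfl⟩ := hm₁
      obtain ⟨b, _, hab⟩ := hm₂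
      have := List.append_inj' hab.symm (by simp)
      exact hne this.1
    have hcard : (build A (T + 1)).card = ∑ l ∈ build A T, ((A T l).image fun a => l ++ [a]).card := by
      rw [build]; exact Finset.card_biUnion hdisj
    rw [hcard]
    calc M ^ (T + 1) = M ^ T * M := by ring
      _ ≤ (build A T).card * M := Nat.mul_le_mul_right _ hT
      _ ≤ ∑ l ∈ build A T, ((A T l).image fun a => l ++ [a]).card := by
          rw [← smul_eq_mul]
          apply Finset.card_nsmul_le_sum
          intro l hl
          rw [Finset.card_image_of_injective _ (fun a b hab => by simpa using hab)]
          exact h T (by omega) l hl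


variable {n k x u : ℕ} {E : Finset (Finset ℕ)} {l : List ℕ}

lemma core_w0 : core n k E x 0 l = Finset.Icc 1 n := by unfold core; norm_num

lemma core_y0 : core n k E x 1 l = nbr n E (l.getD 0 0) x := by unfold core; norm_num

lemma core_v0 : core n k E x 2 l = nbr n E (l.getD 0 0) x := by unfold core; norm_num

lemma core_z0 : core n k E x 3 l = nbr n E x (l.getD 1 0) := by unfold core; norm_num

lemma core_w {j : ℕ} (hj : 1 ≤ j) :
    core n k E x (4 * j) l
      = nbr n E (l.getD (4 * (j - 1) + 1) 0) (l.getD (4 * (j - 1) + 3) 0) := by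
  unfold core; dsimp only
  rw [if_pos (by omega : 4 * j % 4 = 0), (by omega : 4 * j / 4 = j), if_neg (by omega)]

lemma core_y {j : ℕ} (hj : 1 ≤ j) :
    core n k E x (4 * j + 1) l
      = nbr n E (l.getD (4 * (j - 1) + 2) 0) (l.getD (4 * (j - 1)) 0) := by
  unfold core; dsimp only
  rw [if_neg (by omega : ¬ (4 * j + 1) % 4 = 0), if_pos (by omega : (4 * j + 1) % 4 = 1),
    (by omega : (4 * j + 1) / 4 = j), if_neg (by omega)]

lemma core_v {j : ℕ} (hj : 1 ≤ j) (hj2 : j < 2 * k - 1) :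
    core n k E x (4 * j + 2) l
      = nbr n E (l.getD (4 * j) 0) (l.getD (4 * (j - 1) + 1) 0) := by
  unfold core; dsimp only
  rw [if_neg (by omega : ¬ (4 * j + 2) % 4 = 0), if_neg (by omega : ¬ (4 * j + 2) % 4 = 1),
    if_pos (by omega : (4 * j + 2) % 4 = 2), (by omega : (4 * j + 2) / 4 = j),
    if_neg (by omega), if_neg (by omega)]

lemma core_vtop (hk : 1 ≤ k) :
    core n k E x (4 * (2 * k - 1) + 2) l
      = nbr n E (l.getD (4 * (2 * k - 1)) 0) (l.getD (4 * (2 * k - 2) + 1) 0)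
        ∩ nbr n E (l.getD (4 * (2 * k - 1)) 0) (l.getD (4 * (2 * k - 1) + 1) 0) := by
  unfold core; dsimp only
  rw [if_neg (by omega : ¬ (4 * (2 * k - 1) + 2) % 4 = 0),
    if_neg (by omega : ¬ (4 * (2 * k - 1) + 2) % 4 = 1),
    if_pos (by omega : (4 * (2 * k - 1) + 2) % 4 = 2),
    (by omega : (4 * (2 * k - 1) + 2) / 4 = 2 * k - 1),
    if_neg (by omega), if_pos rfl, (by omega : 2 * k - 1 - 1 = 2 * k - 2)]

lemma core_z {j : ℕ} (hj : 1 ≤ j) (hj2 : j < 2 * k - 1) :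
    core n k E x (4 * j + 3) l
      = nbr n E (l.getD (4 * (j - 1)) 0) (l.getD (4 * j + 1) 0) := by
  unfold core; dsimp only
  rw [if_neg (by omega : ¬ (4 * j + 3) % 4 = 0), if_neg (by omega : ¬ (4 * j + 3) % 4 = 1),
    if_neg (by omega : ¬ (4 * j + 3) % 4 = 2), (by omega : (4 * j + 3) / 4 = j),
    if_neg (by omega), if_neg (by omega)]

lemma core_ztop (hk : 1 ≤ k) :
    core n k E x (4 * (2 * k - 1) + 3) l
      = nbr n E (l.getD (4 * (2 * k - 2)) 0) (l.getD (4 * (2 * k - 1) + 1) 0)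
        ∩ nbr n E (l.getD (4 * (2 * k - 1)) 0) (l.getD (4 * (2 * k - 1) + 1) 0) := by
  unfold core; dsimp only
  rw [if_neg (by omega : ¬ (4 * (2 * k - 1) + 3) % 4 = 0),
    if_neg (by omega : ¬ (4 * (2 * k - 1) + 3) % 4 = 1),
    if_neg (by omega : ¬ (4 * (2 * k - 1) + 3) % 4 = 2),
    (by omega : (4 * (2 * k - 1) + 3) / 4 = 2 * k - 1),
    if_neg (by omega), if_pos rfl, (by omega : 2 * k - 1 - 1 = 2 * k - 2)]


section Main

variable {n k x : ℕ} {E : Finset (Finset ℕ)} {R : Finset ℕ}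

lemma build_facts {u : ℕ} {l : List ℕ} (hl : l ∈ build (stepSet n k E R x) u) :
    l.length = u ∧
    (∀ q, q < u → l.getD q 0 ∈ core n k E x q (l.take q)) ∧
    (∀ q, q < u → l.getD q 0 ∈ Finset.Icc 1 n) ∧
    (∀ q, q < u → thr n k q < l.getD q 0) ∧
    (∀ q, q < u → l.getD q 0 ∉ R) ∧
    (∀ q, q < u → l.getD q 0 ≠ x) ∧
    (∀ q q', q < q' → q' < u → l.getD q 0 ≠ l.getD q' 0) := by
  have hlen := build_length _ u l hl
  have hs := build_spec _ u l hl
  have hstep : ∀ q, q < u → l.getD q 0 ∈ core n k E x q (l.take q) ∧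
      (thr n k q < l.getD q 0 ∧ l.getD q 0 ∉ R ∧ l.getD q 0 ≠ x ∧ l.getD q 0 ∉ l.take q) := by
    intro q hq
    have h := hs q hq
    simp only [stepSet, Finset.mem_filter] at h
    exact ⟨h.1, h.2⟩
  refine ⟨hlen, fun q hq => (hstep q hq).1,
    fun q hq => core_subset_Icc _ _ _ _ _ _ ((hstep q hq).1),
    fun q hq => (hstep q hq).2.1, fun q hq => (hstep q hq).2.2.1,
    fun q hq => (hstep q hq).2.2.2.1, ?_⟩
  intro q q' hqq' hq' heq
  exact (hstep q' hq').2.2.2.2 (heq ▸ getD_mem_take l hqq' (by omega))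

lemma stepSet_card_ge (u : ℕ) (l : List ℕ) :
    (((core n k E x u l).filter fun a => thr n k u < a).card : ℝ)
      - ((R.card : ℝ) + 1 + l.length) ≤ ((stepSet n k E R x u l).card : ℝ) := by
  have hsub : ((core n k E x u l).filter fun a => thr n k u < a)
      ⊆ stepSet n k E R x u l ∪ (R ∪ insert x l.toFinset) := by
    intro a ha
    rw [Finset.mem_filter] at ha
    by_cases h1 : a ∉ R ∧ a ≠ x ∧ a ∉ l
    · exact Finset.mem_union_left _
        (Finset.mem_filter.2 ⟨ha.1, ha.2, h1.1, h1.2.1, h1.2.2⟩)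
    · apply Finset.mem_union_right
      push_neg at h1
      by_cases h2 : a ∈ R
      · exact Finset.mem_union_left _ h2
      · apply Finset.mem_union_right
        by_cases h3 : a = x
        · simp [h3]
        · simp [List.mem_toFinset, h1 h2 h3]
  have h1 : (((core n k E x u l).filter fun a => thr n k u < a)).card
      ≤ (stepSet n k E R x u l).card + (R.card + (1 + l.length)) := by
    refine le_trans (Finset.card_le_card hsub) ?_
    refine le_trans (Finset.card_union_le _ _) ?_
    apply add_le_add le_rfl
    refine le_trans (Finset.card_union_le _ _) ?_
    apply add_le_add le_rfl
    refine le_trans (Finset.card_insert_le _ _) ?_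
    have := l.toFinset_card_le
    omega
  have := (Nat.cast_le (α := ℝ)).2 h1
  push_cast at this ⊢
  linarith

lemma climb (hk : 1 ≤ k) {j A B : ℕ} (hj : 1 ≤ j)
    (hA : tnat n k (j - 1) < A) (hB : tnat n k (j - 1) < B) :
    (n : ℝ) / (2 * k) + (tnat n k j : ℝ)
      ≤ min (min (A : ℝ) (B : ℝ)) ((n : ℝ) / 2) + (1 / (k : ℝ)) * n := by
  have hkR : (1 : ℝ) ≤ (k : ℝ) := by exact_mod_cast hk
  have hc : ((n / (2 * k) : ℕ) : ℝ) ≤ (n : ℝ) / (2 * k) := by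
    push_cast [Nat.cast_div_le]
    exact_mod_cast Nat.cast_div_le
  have hh : ((n / 2 : ℕ) : ℝ) ≤ (n : ℝ) / 2 := by exact_mod_cast Nat.cast_div_le
  have h1 : tnat n k j ≤ tnat n k (j - 1) + n / (2 * k) := by
    obtain ⟨j', rfl⟩ : ∃ j', j = j' + 1 := ⟨j - 1, by omega⟩
    simp only [tnat, Nat.add_sub_cancel]
    rcases le_total (j' * (n / (2 * k))) (n / 2) with hc | hc
    · rw [min_eq_left hc]
      have he : (j' + 1) * (n / (2 * k)) = j' * (n / (2 * k)) + n / (2 * k) := by ring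
      rw [← he]
      exact min_le_left _ _
    · rw [min_eq_right hc]
      exact le_trans (min_le_right _ _) (Nat.le_add_right _ _)
  have h1' : (tnat n k j : ℝ) ≤ (tnat n k (j - 1) : ℝ) + (n : ℝ) / (2 * k) := by
    have := (Nat.cast_le (α := ℝ)).2 h1
    push_cast at this
    linarith [hc]
  have hA' : (tnat n k (j - 1) : ℝ) + 1 ≤ (A : ℝ) := by exact_mod_cast hA
  have hB' : (tnat n k (j - 1) : ℝ) + 1 ≤ (B : ℝ) := by exact_mod_cast hB
  have hhalf : (1 / (k : ℝ)) * n = (n : ℝ) / (2 * k) + (n : ℝ) / (2 * k) := by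
    field_simp
    ring
  rcases le_or_gt (min (A : ℝ) (B : ℝ)) ((n : ℝ) / 2) with h | h
  · rw [min_eq_left h]
    have hmin : (tnat n k (j - 1) : ℝ) + 1 ≤ min (A : ℝ) (B : ℝ) := le_min hA' hB'
    linarith
  · rw [min_eq_right h.le]
    have h2 : (tnat n k j : ℝ) ≤ (n : ℝ) / 2 := by
      refine le_trans ?_ hh
      exact_mod_cast min_le_right _ _
    have h3 : (0 : ℝ) ≤ (n : ℝ) / (2 * k) := by positivity
    linarith

lemma top_min {A B : ℕ} (hA : n / 2 < A) (hB : n / 2 < B) :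
    min (min (A : ℝ) (B : ℝ)) ((n : ℝ) / 2) = (n : ℝ) / 2 := by
  have h1 : (n : ℝ) / 2 ≤ (A : ℝ) := by
    have : (n : ℝ) < 2 * A := by exact_mod_cast (by omega : n < 2 * A)
    linarith
  have h2 : (n : ℝ) / 2 ≤ (B : ℝ) := by
    have : (n : ℝ) < 2 * B := by exact_mod_cast (by omega : n < 2 * B)
    linarith
  exact min_eq_right (le_min h1 h2)

lemma top_reach (hk : 3 ≤ k) (hn : 1000000 * (k + 1) ^ 3 ≤ n) :
    n / 2 ≤ (2 * k - 2) * (n / (2 * k)) := by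
  set q := n / (2 * k) with hq
  have hmod : 2 * k * q + n % (2 * k) = n := by rw [hq]; exact Nat.div_add_mod n (2 * k)
  have hr : n % (2 * k) < 2 * k := Nat.mod_lt _ (by omega)
  have hq2k : 2 * k ≤ q := by
    rw [hq, Nat.le_div_iff_mul_le (by omega : 0 < 2 * k)]
    have h1 : 2 * k * (2 * k) = 4 * k ^ 2 := by ring
    have h2 : k ^ 2 ≤ (k + 1) ^ 2 := Nat.pow_le_pow_left (by omega) 2
    have h3 : (k + 1) ^ 2 ≤ (k + 1) ^ 3 := Nat.pow_le_pow_right (by omega) (by omega)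
    omega
  have hq6 : 6 * q ≤ n := by
    have h1 : 6 * q ≤ 2 * k * q := Nat.mul_le_mul_right q (by omega)
    omega
  have hlink : (2 * k - 2) * q + 2 * q = 2 * k * q := by
    rw [← Nat.add_mul]
    congr 1
    omega
  omega

lemma margin (hk : 3 ≤ k) (hn : 1000000 * (k + 1) ^ 3 ≤ n) (Rc len : ℝ)
    (hR : Rc ≤ (1 / (100 * (k : ℝ))) ^ 2 * n) (hlen : len ≤ 8 * k) :
    ((n / (3 * k) : ℕ) : ℝ) + 1 + (Rc + 1 + len) ≤ (n : ℝ) / (2 * k) := by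
  have hkR : (3 : ℝ) ≤ (k : ℝ) := by exact_mod_cast hk
  have hkpos : (0 : ℝ) < (k : ℝ) := by linarith
  have hnR : (1000000 : ℝ) * ((k : ℝ) + 1) ^ 3 ≤ (n : ℝ) := by exact_mod_cast hn
  have hnn : (0 : ℝ) ≤ (n : ℝ) := Nat.cast_nonneg n
  have h1 : ((n / (3 * k) : ℕ) : ℝ) ≤ (n : ℝ) / (3 * k) := by exact_mod_cast Nat.cast_div_le
  have h2 : (1 / (100 * (k : ℝ))) ^ 2 * n = (n : ℝ) / (10000 * (k : ℝ) ^ 2) := by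
    rw [div_pow, one_pow, div_mul_eq_mul_div, one_mul]
    congr 1
    ring
  have h3 : (n : ℝ) / (10000 * (k : ℝ) ^ 2) ≤ (n : ℝ) / (12 * k) := by
    apply div_le_div_of_nonneg_left hnn (by positivity)
    nlinarith
  have h4 : (8 * (k : ℝ) + 2) ≤ (n : ℝ) / (12 * k) := by
    rw [le_div_iff₀ (by positivity)]
    nlinarith [sq_nonneg ((k : ℝ) + 1), sq_nonneg ((k : ℝ) - 1)]
  have h5 : (n : ℝ) / (2 * k) - (n : ℝ) / (3 * k) = (n : ℝ) / (12 * k) + (n : ℝ) / (12 * k) := by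
    field_simp
    ring
  linarith

lemma step_card (hk : 3 ≤ k) (hn : 1000000 * (k + 1) ^ 3 ≤ n)
    (hdeg : DegCond n E (1 / (k : ℝ)))
    (hR : (R.card : ℝ) ≤ (1 / (100 * (k : ℝ))) ^ 2 * n)
    (hx : x ∈ Finset.Icc 1 n)
    {u : ℕ} (hu : u < 8 * k) {l : List ℕ}
    (hl : l ∈ build (stepSet n k E R x) u) :
    n / (3 * k) + 1 ≤ (stepSet n k E R x u l).card := by
  obtain ⟨hlen, hcore, hicc, hthr, hR', hnx, hdist⟩ := build_facts hl
  have hhalf : (1 / (k : ℝ)) * n = (n : ℝ) / (2 * k) + (n : ℝ) / (2 * k) := by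
    have : (k : ℝ) ≠ 0 := by positivity
    field_simp
    ring
  have hnn : (0 : ℝ) ≤ (n : ℝ) / (2 * k) := by positivity
  have key : (n : ℝ) / (2 * k) + (thr n k u : ℝ) ≤ ((core n k E x u l).card : ℝ) := by
    obtain ⟨j, r, hr4, rfl⟩ : ∃ j r, r < 4 ∧ u = 4 * j + r :=
      ⟨u / 4, u % 4, by omega, by omega⟩
    -- threshold helper for earlier positions
    have hthr' : ∀ q j', q < 4 * j + r → q < 8 * k - 2 → q / 4 = j' →
        tnat n k j' < l.getD q 0 := by
      intro q j' hq hq2 hq3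
      have := hthr q hq
      rwa [thr_eq hq2, hq3] at this
    have hdegIcc : ∀ {a b : ℕ}, a ∈ Finset.Icc 1 n → b ∈ Finset.Icc 1 n → a ≠ b →
        min (min (a : ℝ) (b : ℝ)) ((n : ℝ) / 2) + (1 / (k : ℝ)) * n
          ≤ ((nbr n E a b).card : ℝ) := fun ha hb hab => deg_ge hdeg ha hb hab
    interval_cases r
    · -- r = 0
      by_cases hj0 : j = 0
      · subst hj0
        rw [show 4 * 0 + 0 = 0 from rfl, core_w0]
        have hthrU : thr n k 0 = 0 := by
          rw [thr_eq (by omega)]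
          norm_num [tnat]
        rw [hthrU, Nat.card_Icc]
        have h1 : ((n + 1 - 1 : ℕ) : ℝ) = (n : ℝ) := by
          rw [Nat.add_sub_cancel]
        rw [h1]
        have hk1 : (1:ℝ) ≤ (k:ℝ) := by exact_mod_cast (by omega : 1 ≤ k)
        have h2 : (n:ℝ)/(2*k) ≤ (n:ℝ) := div_le_self (Nat.cast_nonneg n) (by linarith)
        push_cast
        linarith
      · have hj1 : 1 ≤ j := by omega
        rw [(by ring : 4 * j + 0 = 4 * j), core_w hj1]
        have hthrU : (thr n k (4 * j) : ℝ) = (tnat n k j : ℝ) := by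
          rw [thr_eq (by omega)]
          congr 2
          omega
        have hA := hthr' (4 * (j - 1) + 1) (j - 1) (by omega) (by omega) (by omega)
        have hB := hthr' (4 * (j - 1) + 3) (j - 1) (by omega) (by omega) (by omega)
        have hab := hdist (4 * (j - 1) + 1) (4 * (j - 1) + 3) (by omega) (by omega)
        have hd := hdegIcc (hicc _ (by omega)) (hicc _ (by omega)) hab
        have hcl := climb (by omega) hj1 hA hB
        rw [hthrU]
        linarith
    · -- r = 1
      by_cases hj0 : j = 0
      · subst hj0
        rw [show 4 * 0 + 1 = 1 from rfl, core_y0]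
        have hthrU : thr n k 1 = 0 := by
          rw [thr_eq (by omega)]
          norm_num [tnat]
        have hab : l.getD 0 0 ≠ x := hnx 0 (by omega)
        have hd := hdegIcc (hicc 0 (by omega)) hx hab
        have hmin : (0:ℝ) ≤ min (min ((l.getD 0 0 : ℕ) : ℝ) ((x:ℕ):ℝ)) ((n:ℝ)/2) :=
          le_min (le_min (Nat.cast_nonneg _) (Nat.cast_nonneg _)) (by positivity)
        rw [hthrU]
        push_cast
        linarith
      · have hj1 : 1 ≤ j := by omega
        rw [core_y hj1]
        have hthrU : (thr n k (4 * j + 1) : ℝ) = (tnat n k j : ℝ) := by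
          rw [thr_eq (by omega)]
          congr 2
          omega
        have hA := hthr' (4 * (j - 1) + 2) (j - 1) (by omega) (by omega) (by omega)
        have hB := hthr' (4 * (j - 1)) (j - 1) (by omega) (by omega) (by omega)
        have hab := hdist (4 * (j - 1)) (4 * (j - 1) + 2) (by omega) (by omega)
        have hd := hdegIcc (hicc _ (by omega)) (hicc _ (by omega)) hab.symm
        have hcl := climb (by omega) hj1 hA hB
        rw [hthrU]
        linarith
    · -- r = 2
      by_cases hj0 : j = 0
      · subst hj0
        rw [show 4 * 0 + 2 = 2 from rfl, core_v0]
        have hthrU : thr n k 2 = 0 := by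
          rw [thr_eq (by omega)]
          norm_num [tnat]
        have hab : l.getD 0 0 ≠ x := hnx 0 (by omega)
        have hd := hdegIcc (hicc 0 (by omega)) hx hab
        have hmin : (0:ℝ) ≤ min (min ((l.getD 0 0 : ℕ) : ℝ) ((x:ℕ):ℝ)) ((n:ℝ)/2) :=
          le_min (le_min (Nat.cast_nonneg _) (Nat.cast_nonneg _)) (by positivity)
        rw [hthrU]
        push_cast
        linarith
      · by_cases hjtop : j = 2 * k - 1
        · subst hjtop
          rw [core_vtop (by omega)]
          have hthrU : (thr n k (4 * (2 * k - 1) + 2) : ℝ) = 0 := by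
            rw [thr_top (by omega)]
            norm_num
          have htop : tnat n k (2 * k - 1) = n / 2 := by
            unfold tnat
            have h1 := top_reach hk hn
            have h2 : (2 * k - 2) * (n / (2 * k)) ≤ (2 * k - 1) * (n / (2 * k)) :=
              Nat.mul_le_mul_right _ (by omega)
            omega
          have htop2 : tnat n k (2 * k - 2) = n / 2 := by
            unfold tnat
            have h1 := top_reach hk hn
            omega
          have hA : n / 2 < l.getD (4 * (2 * k - 1)) 0 := by
            have := hthr' (4 * (2 * k - 1)) (2 * k - 1) (by omega) (by omega) (by omega)
            omega
          have hB : n / 2 < l.getD (4 * (2 * k - 2) + 1) 0 := by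
            have := hthr' (4 * (2 * k - 2) + 1) (2 * k - 2) (by omega) (by omega) (by omega)
            omega
          have hC : n / 2 < l.getD (4 * (2 * k - 1) + 1) 0 := by
            have := hthr' (4 * (2 * k - 1) + 1) (2 * k - 1) (by omega) (by omega) (by omega)
            omega
          have hab1 := hdist (4 * (2 * k - 2) + 1) (4 * (2 * k - 1)) (by omega) (by omega)
          have hab2 := hdist (4 * (2 * k - 1)) (4 * (2 * k - 1) + 1) (by omega) (by omega)
          have hd1 := hdegIcc (hicc (4 * (2 * k - 1)) (by omega))
            (hicc (4 * (2 * k - 2) + 1) (by omega)) hab1.symm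
          have hd2 := hdegIcc (hicc (4 * (2 * k - 1)) (by omega))
            (hicc (4 * (2 * k - 1) + 1) (by omega)) hab2
          rw [top_min hA hB] at hd1
          rw [top_min hA hC] at hd2
          have hint := inter_card_ge n E (l.getD (4 * (2 * k - 1)) 0)
            (l.getD (4 * (2 * k - 2) + 1) 0) (l.getD (4 * (2 * k - 1)) 0)
            (l.getD (4 * (2 * k - 1) + 1) 0)
          rw [hthrU]
          linarith
        · have hj1 : 1 ≤ j := by omega
          rw [core_v hj1 (by omega)]
          have hthrU : (thr n k (4 * j + 2) : ℝ) = (tnat n k j : ℝ) := by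
            rw [thr_eq (by omega)]
            congr 2
            omega
          have hA0 := hthr' (4 * j) j (by omega) (by omega) (by omega)
          have hA : tnat n k (j - 1) < l.getD (4 * j) 0 :=
            lt_of_le_of_lt (tnat_mono n k (by omega)) hA0
          have hB := hthr' (4 * (j - 1) + 1) (j - 1) (by omega) (by omega) (by omega)
          have hab := hdist (4 * (j - 1) + 1) (4 * j) (by omega) (by omega)
          have hd := hdegIcc (hicc _ (by omega)) (hicc _ (by omega)) hab.symm
          have hcl := climb (by omega) hj1 hA hB
          rw [hthrU]
          linarith
    · -- r = 3
      by_cases hj0 : j = 0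
      · subst hj0
        rw [show 4 * 0 + 3 = 3 from rfl, core_z0]
        have hthrU : thr n k 3 = 0 := by
          rw [thr_eq (by omega)]
          norm_num [tnat]
        have hab : x ≠ l.getD 1 0 := (hnx 1 (by omega)).symm
        have hd := hdegIcc hx (hicc 1 (by omega)) hab
        have hmin : (0:ℝ) ≤ min (min ((x:ℕ):ℝ) ((l.getD 1 0 : ℕ) : ℝ)) ((n:ℝ)/2) :=
          le_min (le_min (Nat.cast_nonneg _) (Nat.cast_nonneg _)) (by positivity)
        rw [hthrU]
        push_cast
        linarith
      · by_cases hjtop : j = 2 * k - 1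
        · subst hjtop
          rw [core_ztop (by omega)]
          have hthrU : (thr n k (4 * (2 * k - 1) + 3) : ℝ) = 0 := by
            rw [thr_top (by omega)]
            norm_num
          have htop : tnat n k (2 * k - 1) = n / 2 := by
            unfold tnat
            have h1 := top_reach hk hn
            have h2 : (2 * k - 2) * (n / (2 * k)) ≤ (2 * k - 1) * (n / (2 * k)) :=
              Nat.mul_le_mul_right _ (by omega)
            omega
          have htop2 : tnat n k (2 * k - 2) = n / 2 := by
            unfold tnat
            have h1 := top_reach hk hn
            omega
          have hA : n / 2 < l.getD (4 * (2 * k - 2)) 0 := by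
            have := hthr' (4 * (2 * k - 2)) (2 * k - 2) (by omega) (by omega) (by omega)
            omega
          have hB : n / 2 < l.getD (4 * (2 * k - 1) + 1) 0 := by
            have := hthr' (4 * (2 * k - 1) + 1) (2 * k - 1) (by omega) (by omega) (by omega)
            omega
          have hC : n / 2 < l.getD (4 * (2 * k - 1)) 0 := by
            have := hthr' (4 * (2 * k - 1)) (2 * k - 1) (by omega) (by omega) (by omega)
            omega
          have hab1 := hdist (4 * (2 * k - 2)) (4 * (2 * k - 1) + 1) (by omega) (by omega)
          have hab2 := hdist (4 * (2 * k - 1)) (4 * (2 * k - 1) + 1) (by omega) (by omega)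
          have hd1 := hdegIcc (hicc (4 * (2 * k - 2)) (by omega))
            (hicc (4 * (2 * k - 1) + 1) (by omega)) hab1
          have hd2 := hdegIcc (hicc (4 * (2 * k - 1)) (by omega))
            (hicc (4 * (2 * k - 1) + 1) (by omega)) hab2
          rw [top_min hA hB] at hd1
          rw [top_min hC hB] at hd2
          have hint := inter_card_ge n E (l.getD (4 * (2 * k - 2)) 0)
            (l.getD (4 * (2 * k - 1) + 1) 0) (l.getD (4 * (2 * k - 1)) 0)
            (l.getD (4 * (2 * k - 1) + 1) 0)
          rw [hthrU]
          linarith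
        · have hj1 : 1 ≤ j := by omega
          rw [core_z hj1 (by omega)]
          have hthrU : (thr n k (4 * j + 3) : ℝ) = (tnat n k j : ℝ) := by
            rw [thr_eq (by omega)]
            congr 2
            omega
          have hA := hthr' (4 * (j - 1)) (j - 1) (by omega) (by omega) (by omega)
          have hB0 := hthr' (4 * j + 1) j (by omega) (by omega) (by omega)
          have hB : tnat n k (j - 1) < l.getD (4 * j + 1) 0 :=
            lt_of_le_of_lt (tnat_mono n k (by omega)) hB0
          have hab := hdist (4 * (j - 1)) (4 * j + 1) (by omega) (by omega)
          have hd := hdegIcc (hicc _ (by omega)) (hicc _ (by omega)) hab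
          have hcl := climb (by omega) hj1 hA hB
          rw [hthrU]
          linarith
  have hM := margin hk hn (R.card : ℝ) (l.length : ℝ) hR
    (by rw [hlen]; exact_mod_cast Nat.cast_le.2 hu.le)
  have h2 := filter_thr_card (core_subset_Icc n k E x u l) (thr n k u)
  have h3 := stepSet_card_ge (n := n) (k := k) (E := E) (R := R) (x := x) u l
  have hfin : ((n / (3 * k) : ℕ) : ℝ) + 1 ≤ ((stepSet n k E R x u l).card : ℝ) := by
    linarith
  exact_mod_cast hfin

lemma absorber_of_build (hk : 3 ≤ k) (hx : x ∈ Finset.Icc 1 n) {l : List ℕ}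
    (hl : l ∈ build (stepSet n k E R x) (8 * k)) :
    (IsAbsorber n E (2 * k) x
      (fun i : Fin (2 * k) => l.getD (4 * (i : ℕ) + 2) 0)
      (fun i : Fin (2 * k) => l.getD (4 * (i : ℕ)) 0)
      (fun i : Fin (2 * k) => l.getD (4 * (i : ℕ) + 1) 0)
      (fun i : Fin (2 * k) => l.getD (4 * (i : ℕ) + 3) 0)) ∧
    ∀ i : Fin (2 * k), l.getD (4 * (i : ℕ) + 2) 0 ∉ R ∧ l.getD (4 * (i : ℕ)) 0 ∉ R ∧
      l.getD (4 * (i : ℕ) + 1) 0 ∉ R ∧ l.getD (4 * (i : ℕ) + 3) 0 ∉ R := by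
  obtain ⟨hlen, hcoreq, hicc, hthr, hR', hnx, hdist⟩ := build_facts hl
  have h01 : ({l.getD 0 0, x, l.getD 1 0} : Finset ℕ) ∈ E := by
    have h := hcoreq 1 (by omega)
    rw [core_y0, getD_take_eq l (by omega)] at h
    exact mem_nbr h
  have h02 : ({l.getD 0 0, x, l.getD 2 0} : Finset ℕ) ∈ E := by
    have h := hcoreq 2 (by omega)
    rw [core_v0, getD_take_eq l (by omega)] at h
    exact mem_nbr h
  have h03 : ({x, l.getD 1 0, l.getD 3 0} : Finset ℕ) ∈ E := by
    have h := hcoreq 3 (by omega)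
    rw [core_z0, getD_take_eq l (by omega)] at h
    exact mem_nbr h
  have hw : ∀ j, 1 ≤ j → j < 2 * k →
      ({l.getD (4 * (j - 1) + 1) 0, l.getD (4 * (j - 1) + 3) 0, l.getD (4 * j) 0} :
        Finset ℕ) ∈ E := by
    intro j hj1 hj2
    have h := hcoreq (4 * j) (by omega)
    rw [core_w hj1, getD_take_eq l (by omega), getD_take_eq l (by omega)] at h
    exact mem_nbr h
  have hy : ∀ j, 1 ≤ j → j < 2 * k →
      ({l.getD (4 * (j - 1) + 2) 0, l.getD (4 * (j - 1)) 0, l.getD (4 * j + 1) 0} :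
        Finset ℕ) ∈ E := by
    intro j hj1 hj2
    have h := hcoreq (4 * j + 1) (by omega)
    rw [core_y hj1, getD_take_eq l (by omega), getD_take_eq l (by omega)] at h
    exact mem_nbr h
  have hv : ∀ j, 1 ≤ j → j < 2 * k →
      ({l.getD (4 * j) 0, l.getD (4 * (j - 1) + 1) 0, l.getD (4 * j + 2) 0} :
        Finset ℕ) ∈ E := by
    intro j hj1 hj2
    have h := hcoreq (4 * j + 2) (by omega)
    by_cases hjtop : j = 2 * k - 1
    · rw [hjtop] at h ⊢
      rw [core_vtop (by omega)] at h
      rw [show 2 * k - 1 - 1 = 2 * k - 2 by omega]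
      have h' := (Finset.mem_inter.1 h).1
      rw [getD_take_eq l (by omega), getD_take_eq l (by omega)] at h'
      exact mem_nbr h'
    · rw [core_v hj1 (by omega), getD_take_eq l (by omega), getD_take_eq l (by omega)] at h
      exact mem_nbr h
  have hvtop2 : ({l.getD (4 * (2 * k - 1)) 0, l.getD (4 * (2 * k - 1) + 1) 0,
      l.getD (4 * (2 * k - 1) + 2) 0} : Finset ℕ) ∈ E := by
    have h := hcoreq (4 * (2 * k - 1) + 2) (by omega)
    rw [core_vtop (by omega)] at h
    have h' := (Finset.mem_inter.1 h).2
    rw [getD_take_eq l (by omega), getD_take_eq l (by omega)] at h'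
    exact mem_nbr h'
  have hz : ∀ j, 1 ≤ j → j < 2 * k →
      ({l.getD (4 * (j - 1)) 0, l.getD (4 * j + 1) 0, l.getD (4 * j + 3) 0} :
        Finset ℕ) ∈ E := by
    intro j hj1 hj2
    have h := hcoreq (4 * j + 3) (by omega)
    by_cases hjtop : j = 2 * k - 1
    · rw [hjtop] at h ⊢
      rw [core_ztop (by omega)] at h
      rw [show 2 * k - 1 - 1 = 2 * k - 2 by omega]
      have h' := (Finset.mem_inter.1 h).1
      rw [getD_take_eq l (by omega), getD_take_eq l (by omega)] at h'
      exact mem_nbr h'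
    · rw [core_z hj1 (by omega), getD_take_eq l (by omega), getD_take_eq l (by omega)] at h
      exact mem_nbr h
  have hztop2 : ({l.getD (4 * (2 * k - 1)) 0, l.getD (4 * (2 * k - 1) + 1) 0,
      l.getD (4 * (2 * k - 1) + 3) 0} : Finset ℕ) ∈ E := by
    have h := hcoreq (4 * (2 * k - 1) + 3) (by omega)
    rw [core_ztop (by omega)] at h
    have h' := (Finset.mem_inter.1 h).2
    rw [getD_take_eq l (by omega), getD_take_eq l (by omega)] at h'
    exact mem_nbr h'
  have hgg : ∀ q q', q < 8 * k → q' < 8 * k → l.getD q 0 = l.getD q' 0 → q = q' := by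
    intro q q' h1 h2 heq
    by_contra hne
    rcases Nat.lt_or_ge q q' with h | h
    · exact hdist q q' h h2 heq
    · exact hdist q' q (by omega) h1 heq.symm
  refine ⟨⟨?_, ?_, ?_, ?_, ?_⟩, ?_⟩
  · -- injective
    intro p q hval
    have hi := p.2.isLt
    have hi' := q.2.isLt
    have key : ∀ (r : Fin 4) (i : Fin (2 * k)),
        (![fun i : Fin (2 * k) => l.getD (4 * (i : ℕ) + 2) 0,
           fun i : Fin (2 * k) => l.getD (4 * (i : ℕ)) 0,
           fun i : Fin (2 * k) => l.getD (4 * (i : ℕ) + 1) 0,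
           fun i : Fin (2 * k) => l.getD (4 * (i : ℕ) + 3) 0] r i)
          = l.getD (4 * (i : ℕ) + (![2, 0, 1, 3] : Fin 4 → ℕ) r) 0 := by
      intro r i
      fin_cases r
      · rfl
      · show l.getD (4 * (i : ℕ)) 0 = l.getD (4 * (i : ℕ) + 0) 0
        rw [Nat.add_zero]
      · rfl
      · rfl
    have hval' : l.getD (4 * (p.2 : ℕ) + (![2, 0, 1, 3] : Fin 4 → ℕ) p.1) 0
        = l.getD (4 * (q.2 : ℕ) + (![2, 0, 1, 3] : Fin 4 → ℕ) q.1) 0 := by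
      rw [← key, ← key]
      exact hval
    have hb : ∀ r : Fin 4, (![2, 0, 1, 3] : Fin 4 → ℕ) r < 4 := by decide
    have hinj34 : ∀ r r' : Fin 4,
        (![2, 0, 1, 3] : Fin 4 → ℕ) r = (![2, 0, 1, 3] : Fin 4 → ℕ) r' → r = r' := by decide
    have hb1 := hb p.1
    have hb2 := hb q.1
    have hp := hgg _ _ (by omega) (by omega) hval'
    have h2 : (p.2 : ℕ) = (q.2 : ℕ) := by omega
    have h1 : (![2, 0, 1, 3] : Fin 4 → ℕ) p.1 = (![2, 0, 1, 3] : Fin 4 → ℕ) q.1 := by omega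
    exact Prod.ext (hinj34 _ _ h1) (Fin.ext h2)
  · intro i
    have hi := i.isLt
    exact ⟨hicc _ (by omega), hicc _ (by omega), hicc _ (by omega), hicc _ (by omega)⟩
  · intro i
    have hi := i.isLt
    exact ⟨hnx _ (by omega), hnx _ (by omega), hnx _ (by omega), hnx _ (by omega)⟩
  · intro h
    refine ⟨?_, h01, h03, ?_, hztop2⟩
    · exact triple_rot (l.getD 0 0) x (l.getD 2 0) ▸ h02
    · exact triple_rot (l.getD (4 * (2 * k - 1)) 0) (l.getD (4 * (2 * k - 1) + 1) 0)
        (l.getD (4 * (2 * k - 1) + 2) 0) ▸ hvtop2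
  · intro i h
    have ha := hy (i + 1) (by omega) (by omega)
    have hb := hz (i + 1) (by omega) (by omega)
    have hc := hv (i + 1) (by omega) (by omega)
    have hd := hw (i + 1) (by omega) (by omega)
    simp only [Nat.add_sub_cancel] at ha hb hc hd
    exact ⟨ha, hb,
      triple_rot (l.getD (4 * (i + 1)) 0) (l.getD (4 * i + 1) 0)
        (l.getD (4 * (i + 1) + 2) 0) ▸ hc,
      triple_rot (l.getD (4 * i + 1) 0) (l.getD (4 * i + 3) 0)
        (l.getD (4 * (i + 1)) 0) ▸ hd⟩
  · intro i
    have hi := i.isLt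
    exact ⟨hR' _ (by omega), hR' _ (by omega), hR' _ (by omega), hR' _ (by omega)⟩

end Main

end Stmt7

/-- **Many Absorbers.** Let `α = 1/k > 0` with `k ∈ ℕ`, and `s = 2/α = 2k`. There are
`ϑ > 0` and `n₀` such that for `n ≥ n₀`, any 3-graph `([n], E)` satisfying the degree
condition, any `R ⊆ [n]` with `|R| ≤ ϑ²n`, and any vertex `x ∈ [n]`, there are at
least `(αn/3)^(4s)` many `(x,α)`-absorbers with all entries in `[n] \ R`. -/
theorem stmt_7 (k : ℕ) (hk : 0 < k) (α : ℝ) (hαk : α = 1 / k) :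
    ∃ ϑ : ℝ, 0 < ϑ ∧ ∃ n₀ : ℕ, ∀ n : ℕ, n₀ ≤ n →
      ∀ E : Finset (Finset ℕ), IsThreeGraph n E → DegCond n E α →
      ∀ R : Finset ℕ, R ⊆ Finset.Icc 1 n → (R.card : ℝ) ≤ ϑ ^ 2 * n →
      ∀ x ∈ Finset.Icc 1 n,
        (α * n / 3) ^ (4 * (2 * k)) ≤
          (Set.ncard {p : (Fin (2 * k) → ℕ) × (Fin (2 * k) → ℕ) × (Fin (2 * k) → ℕ) ×
              (Fin (2 * k) → ℕ) |
            IsAbsorber n E (2 * k) x p.1 p.2.1 p.2.2.1 p.2.2.2 ∧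
            ∀ i, p.1 i ∉ R ∧ p.2.1 i ∉ R ∧ p.2.2.1 i ∉ R ∧ p.2.2.2 i ∉ R} : ℝ) := by
  subst hαk
  have hkR : (0 : ℝ) < (k : ℝ) := by exact_mod_cast hk
  refine ⟨1 / (100 * (k : ℝ)), by positivity, 1000000 * (k + 1) ^ 3, ?_⟩
  intro n hn E hTG hDeg R hRsub hRcard x hx
  set S := {p : (Fin (2 * k) → ℕ) × (Fin (2 * k) → ℕ) × (Fin (2 * k) → ℕ) ×
      (Fin (2 * k) → ℕ) |
    IsAbsorber n E (2 * k) x p.1 p.2.1 p.2.2.1 p.2.2.2 ∧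
    ∀ i, p.1 i ∉ R ∧ p.2.1 i ∉ R ∧ p.2.2.1 i ∉ R ∧ p.2.2.2 i ∉ R} with hS
  by_cases hk3 : 3 ≤ k
  · -- main case
    classical
    have hn4 : 1000000 * (k + 1) ^ 3 ≤ n := hn
    have hstep : ∀ u, u < 8 * k → ∀ l ∈ Stmt7.build (Stmt7.stepSet n k E R x) u,
        n / (3 * k) + 1 ≤ (Stmt7.stepSet n k E R x u l).card :=
      fun u hu l hl => Stmt7.step_card hk3 hn4 hDeg hRcard hx hu hl
    have hcount := Stmt7.build_card (Stmt7.stepSet n k E R x) (n / (3 * k) + 1) (8 * k) hstep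
    set toT : List ℕ → (Fin (2 * k) → ℕ) × (Fin (2 * k) → ℕ) × (Fin (2 * k) → ℕ) ×
        (Fin (2 * k) → ℕ) :=
      fun l => (fun i => l.getD (4 * (i : ℕ) + 2) 0, fun i => l.getD (4 * (i : ℕ)) 0,
        fun i => l.getD (4 * (i : ℕ) + 1) 0, fun i => l.getD (4 * (i : ℕ) + 3) 0) with htoT
    have hinj : Set.InjOn toT ↑(Stmt7.build (Stmt7.stepSet n k E R x) (8 * k)) := by
      intro l1 h1 l2 h2 he
      have hl1 : l1.length = 8 * k := Stmt7.build_length _ _ _ (Finset.mem_coe.1 h1)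
      have hl2 : l2.length = 8 * k := Stmt7.build_length _ _ _ (Finset.mem_coe.1 h2)
      have hv := congrFun (congrArg (fun p : (Fin (2 * k) → ℕ) × (Fin (2 * k) → ℕ) ×
        (Fin (2 * k) → ℕ) × (Fin (2 * k) → ℕ) => p.1) he)
      have hw := congrFun (congrArg (fun p : (Fin (2 * k) → ℕ) × (Fin (2 * k) → ℕ) ×
        (Fin (2 * k) → ℕ) × (Fin (2 * k) → ℕ) => p.2.1) he)
      have hy := congrFun (congrArg (fun p : (Fin (2 * k) → ℕ) × (Fin (2 * k) → ℕ) ×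
        (Fin (2 * k) → ℕ) × (Fin (2 * k) → ℕ) => p.2.2.1) he)
      have hz := congrFun (congrArg (fun p : (Fin (2 * k) → ℕ) × (Fin (2 * k) → ℕ) ×
        (Fin (2 * k) → ℕ) × (Fin (2 * k) → ℕ) => p.2.2.2) he)
      apply List.ext_getElem (by omega)
      intro i hi1 hi2
      have hi : i < 8 * k := by omega
      have hj : i / 4 < 2 * k := by omega
      have hgd : l1.getD i 0 = l2.getD i 0 := by
        rcases (by omega : i % 4 = 0 ∨ i % 4 = 1 ∨ i % 4 = 2 ∨ i % 4 = 3) with h | h | h | h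
        · have h5 := hw ⟨i / 4, hj⟩
          simp only [htoT] at h5
          rwa [show 4 * (i / 4) = i by omega] at h5
        · have h5 := hy ⟨i / 4, hj⟩
          simp only [htoT] at h5
          rwa [show 4 * (i / 4) + 1 = i by omega] at h5
        · have h5 := hv ⟨i / 4, hj⟩
          simp only [htoT] at h5
          rwa [show 4 * (i / 4) + 2 = i by omega] at h5
        · have h5 := hz ⟨i / 4, hj⟩
          simp only [htoT] at h5
          rwa [show 4 * (i / 4) + 3 = i by omega] at h5
      rwa [List.getD_eq_getElem l1 _ (by omega), List.getD_eq_getElem l2 _ (by omega)] at hgd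
    have himg : ↑((Stmt7.build (Stmt7.stepSet n k E R x) (8 * k)).image toT) ⊆ S := by
      intro p hp
      rw [Finset.mem_coe, Finset.mem_image] at hp
      obtain ⟨l, hl, rfl⟩ := hp
      have hA := Stmt7.absorber_of_build hk3 hx hl
      exact ⟨hA.1, hA.2⟩
    have hfin : S.Finite := by
      classical
      set F := Fintype.piFinset fun _ : Fin (2 * k) => Finset.Icc 1 n with hF
      apply Set.Finite.subset (F ×ˢ F ×ˢ F ×ˢ F).finite_toSet
      intro p hp
      obtain ⟨hA, -⟩ := hp
      have hicc := hA.2.1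
      rw [Finset.mem_coe]
      rw [Finset.mem_product, Finset.mem_product, Finset.mem_product]
      refine ⟨?_, ?_, ?_, ?_⟩ <;> rw [hF, Fintype.mem_piFinset] <;> intro i
      · exact (hicc i).1
      · exact (hicc i).2.1
      · exact (hicc i).2.2.1
      · exact (hicc i).2.2.2
    have h1 : ((Stmt7.build (Stmt7.stepSet n k E R x) (8 * k)).image toT).card
        = (Stmt7.build (Stmt7.stepSet n k E R x) (8 * k)).card :=
      Finset.card_image_of_injOn hinj
    have h2 : ((Stmt7.build (Stmt7.stepSet n k E R x) (8 * k)).image toT).card ≤ S.ncard := by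
      rw [← Set.ncard_coe_finset]
      exact Set.ncard_le_ncard himg hfin
    have h3 : (n / (3 * k) + 1) ^ (8 * k) ≤ S.ncard := by omega
    have hbase : (1 / (k : ℝ)) * n / 3 ≤ ((n / (3 * k) + 1 : ℕ) : ℝ) := by
      have hq : n < 3 * k * (n / (3 * k) + 1) := by
        have e : 3 * k * (n / (3 * k) + 1) = 3 * k * (n / (3 * k)) + 3 * k := by ring
        have h4 := Nat.div_add_mod n (3 * k)
        have hr : n % (3 * k) < 3 * k := Nat.mod_lt _ (by omega)
        omega
      have hq' : (n : ℝ) < 3 * (k : ℝ) * (((n / (3 * k) : ℕ) : ℝ) + 1) := by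
        exact_mod_cast hq
      have he2 : (1 / (k : ℝ)) * n / 3 = (n : ℝ) / (3 * k) := by
        field_simp
      rw [he2, div_le_iff₀ (by positivity)]
      push_cast
      nlinarith
    have hbase0 : (0 : ℝ) ≤ (1 / (k : ℝ)) * n / 3 := by positivity
    calc ((1 / (k : ℝ)) * n / 3) ^ (4 * (2 * k))
        = ((1 / (k : ℝ)) * n / 3) ^ (8 * k) := by rw [show 4 * (2 * k) = 8 * k by ring]
      _ ≤ (((n / (3 * k) + 1 : ℕ)) : ℝ) ^ (8 * k) := pow_le_pow_left₀ hbase0 hbase _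
      _ = (((n / (3 * k) + 1) ^ (8 * k) : ℕ) : ℝ) := by push_cast; ring
      _ ≤ (S.ncard : ℝ) := by exact_mod_cast h3
  · -- vacuous case : k ≤ 2 contradicts the degree condition
    exfalso
    have hk2 : k ≤ 2 := by omega
    have hn4 : 4 ≤ n := by
      have h1 : 1 ≤ (k + 1) ^ 3 := Nat.one_le_pow _ _ (by omega)
      omega
    have hkey := hDeg (n - 1) (by simp only [Finset.mem_Icc]; omega) n
      (by simp only [Finset.mem_Icc]; omega) (by omega)
    have hsub : ((Finset.Icc 1 n).filter fun c => ({n - 1, n, c} : Finset ℕ) ∈ E)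
        ⊆ ((Finset.Icc 1 n).erase n).erase (n - 1) := by
      intro c hc
      rw [Finset.mem_filter] at hc
      have h3 := (hTG _ hc.2).1
      have hcn : c ≠ n := by
        intro hcn
        rw [hcn, show ({n - 1, n, n} : Finset ℕ) = {n - 1, n} by
          ext t; simp; try tauto] at h3
        have h5 := Finset.card_insert_le (n - 1) ({n} : Finset ℕ)
        simp at h5
        omega
      have hcn1 : c ≠ n - 1 := by
        intro hcn1
        rw [hcn1, show ({n - 1, n, n - 1} : Finset ℕ) = {n - 1, n} by
          ext t; simp; try tauto] at h3
        have h5 := Finset.card_insert_le (n - 1) ({n} : Finset ℕ)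
        simp at h5
        omega
      exact Finset.mem_erase.2 ⟨hcn1, Finset.mem_erase.2 ⟨hcn, hc.1⟩⟩
    have hcard : pairDeg n E (n - 1) n ≤ n - 2 := by
      have h1 := Finset.card_le_card hsub
      have h2 : (((Finset.Icc 1 n).erase n).erase (n - 1)).card
          = ((Finset.Icc 1 n).erase n).card - 1 :=
        Finset.card_erase_of_mem (Finset.mem_erase.2 ⟨by omega,
          Finset.mem_Icc.2 ⟨by omega, by omega⟩⟩)
      have h3 : ((Finset.Icc 1 n).erase n).card = (Finset.Icc 1 n).card - 1 :=
        Finset.card_erase_of_mem (Finset.mem_Icc.2 ⟨by omega, le_rfl⟩)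
      have h4 : (Finset.Icc 1 n).card = n := by rw [Nat.card_Icc]; omega
      unfold pairDeg
      omega
    have hminR : min (min ((n - 1 : ℕ) : ℝ) ((n : ℕ) : ℝ)) ((n : ℝ) / 2) = (n : ℝ) / 2 := by
      have hc : ((n - 1 : ℕ) : ℝ) = (n : ℝ) - 1 := by
        push_cast [Nat.cast_sub (by omega : 1 ≤ n)]
        ring
      rw [hc]
      have h1 : (n : ℝ) / 2 ≤ (n : ℝ) - 1 := by
        have : (4 : ℝ) ≤ (n : ℝ) := by exact_mod_cast hn4
        linarith
      have h2 : (n : ℝ) / 2 ≤ (n : ℝ) := by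
        have : (0 : ℝ) ≤ (n : ℝ) := Nat.cast_nonneg n
        linarith
      rw [min_eq_right (le_min h1 h2)]
    rw [hminR] at hkey
    have hhalf : (n : ℝ) / 2 ≤ (1 / (k : ℝ)) * n := by
      have h1 : (k : ℝ) ≤ 2 := by exact_mod_cast hk2
      have h2 : (1 : ℝ) / 2 ≤ 1 / (k : ℝ) := by
        apply one_div_le_one_div_of_le hkR h1 |>.trans_eq rfl
      have h3 : (0 : ℝ) ≤ (n : ℝ) := Nat.cast_nonneg n
      calc (n : ℝ) / 2 = (1 / 2) * n := by ring
        _ ≤ (1 / (k : ℝ)) * n := by nlinarith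
    have hcR : ((pairDeg n E (n - 1) n : ℕ) : ℝ) ≤ (n : ℝ) - 2 := by
      have h1 : ((n - 2 : ℕ) : ℝ) = (n : ℝ) - 2 := by
        push_cast [Nat.cast_sub (by omega : 2 ≤ n)]
        ring
      rw [← h1]
      exact_mod_cast hcard
    have hn' : (4 : ℝ) ≤ (n : ℝ) := by exact_mod_cast hn4
    linarith
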